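/- arXiv:1610.02957 — 4 statements merged into one kernel-verified Lean document; each statement's English description precedes it below -/
import Mathlib

section
/- Let G be a d-regular graph with adjacency matrix G on n vertices and m = nd/2 edges, and let U_k denote the Chebyshev polynomial of the second kind. Then the characteristic polynomial of the k-th subdivision of G (each edge replaced by a path with k internal vertices) satisfies φ(S_k(G), x) = (U_k(x/2))^{m−n} · φ(G, x·U_k(x/2) − d·U_{k−1}(x/2)). -/
open Matrix Polynomial

open Classical in
/-- Adjacency matrix of the graph on `Fin n` whose edge list is `ε`. -/
noncomputable def edgeListAdj {n m : ℕ} (ε : Fin m → Fin n × Fin n) :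
    Matrix (Fin n) (Fin n) ℝ :=
  fun u v => if ∃ j, ε j = (u, v) ∨ ε j = (v, u) then 1 else 0

/-- Adjacency matrix of the `k`-th subdivision: each edge `ε j = (u, v)` is replaced
by a path `u, (j,0), (j,1), …, (j,k-1), v` with `k` new internal vertices. -/
def subdivisionAdj {n m : ℕ} (ε : Fin m → Fin n × Fin n) (k : ℕ) :
    Matrix (Fin n ⊕ Fin m × Fin k) (Fin n ⊕ Fin m × Fin k) ℝ :=
  fun a b =>
    match a, b with
    | Sum.inl _, Sum.inl _ => 0
    | Sum.inl u, Sum.inr (j, i) =>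
        if (i.val = 0 ∧ (ε j).1 = u) ∨ (i.val = k - 1 ∧ (ε j).2 = u) then 1 else 0
    | Sum.inr (j, i), Sum.inl u =>
        if (i.val = 0 ∧ (ε j).1 = u) ∨ (i.val = k - 1 ∧ (ε j).2 = u) then 1 else 0
    | Sum.inr (j, i), Sum.inr (j', i') =>
        if j = j' ∧ (i.val + 1 = i'.val ∨ i'.val + 1 = i.val) then 1 else 0

namespace CPSubAux

/-- evaluated Chebyshev polynomial of the second kind -/
noncomputable def t (x : ℝ) (j : ℤ) : ℝ := (Polynomial.Chebyshev.U ℝ j).eval (x / 2)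

lemma t_rec (x : ℝ) (j : ℤ) : x * t x j = t x (j + 1) + t x (j - 1) := by
  have h := Polynomial.Chebyshev.U_add_one ℝ j
  have h2 := congrArg (Polynomial.eval (x / 2)) h
  simp only [t, eval_sub, eval_mul, eval_ofNat, eval_X] at h2 ⊢
  rw [h2]; ring

lemma t_zero (x : ℝ) : t x 0 = 1 := by simp [t, Polynomial.Chebyshev.U_zero]

lemma t_neg_one (x : ℝ) : t x (-1) = 0 := by simp [t, Polynomial.Chebyshev.U_neg_one]

lemma t_rec' (x : ℝ) (j : ℤ) : t x (j + 2) = x * t x (j + 1) - t x j := by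
  have h := t_rec x (j + 1)
  have e1 : j + 1 + 1 = j + 2 := by ring
  have e2 : j + 1 - 1 = j := by ring
  rw [e1, e2] at h
  linarith

lemma t_two_eval : ∀ k : ℕ, t 2 k = k + 1 := by
  have key : ∀ k : ℕ, t 2 k = k + 1 ∧ t 2 (k + 1) = (k + 1) + 1 := by
    intro k
    induction k with
    | zero =>
      constructor
      · simpa using t_zero 2
      · have h := t_rec' 2 (-1)
        rw [t_neg_one] at h
        norm_num at h
        rw [t_zero] at h
        norm_num at h
        norm_num [h]
    | succ k ih =>
      refine ⟨by simpa using ih.2, ?_⟩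
      have h := t_rec' 2 (k : ℤ)
      push_cast
      push_cast at ih
      rw [ih.1, ih.2] at h
      push_cast at h
      rw [show ((k : ℤ) + 2) = ((k : ℤ) + 1) + 1 by ring] at h
      push_cast at h
      rw [h]; ring
  exact fun k => (key k).1

/-- the path matrix `x I - P_k` -/
noncomputable def pM (x : ℝ) (k : ℕ) : Matrix (Fin k) (Fin k) ℝ :=
  Matrix.of fun i i' =>
    (if (i : ℕ) = (i' : ℕ) then x else 0) -
      (if (i : ℕ) + 1 = (i' : ℕ) ∨ (i' : ℕ) + 1 = (i : ℕ) then 1 else 0)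

lemma pM_shift (x : ℝ) (k : ℕ) (i j : Fin k) : pM x (k + 1) i.succ j.succ = pM x k i j := by
  simp only [pM, Matrix.of_apply, Fin.val_succ]
  congr 1
  · exact if_congr (by omega) rfl rfl
  · exact if_congr (by omega) rfl rfl

lemma det_pM_zero (x : ℝ) : (pM x 0).det = 1 := Matrix.det_fin_zero

lemma det_pM_one (x : ℝ) : (pM x 1).det = x := by
  rw [Matrix.det_fin_one]
  simp [pM]

lemma det_pM_rec (x : ℝ) (k : ℕ) :
    (pM x (k + 2)).det = x * (pM x (k + 1)).det - (pM x k).det := by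
  have h00 : pM x (k + 2) 0 0 = x := by simp [pM]
  have h01 : pM x (k + 2) 0 1 = -1 := by
    simp only [pM, Matrix.of_apply, Fin.val_zero, Fin.val_one]
    norm_num
  have hsub0 : (pM x (k + 2)).submatrix Fin.succ ((0 : Fin (k + 2)).succAbove) = pM x (k + 1) := by
    ext i j
    rw [Matrix.submatrix_apply, Fin.zero_succAbove]
    exact pM_shift x (k + 1) i j
  have h10 : (1 : Fin (k + 2)).succAbove 0 = 0 := by
    rw [Fin.succAbove_of_castSucc_lt]
    · rfl
    · simp [Fin.lt_def]
  have hS1 : ((pM x (k + 2)).submatrix Fin.succ ((1 : Fin (k + 2)).succAbove)).det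
      = -(pM x k).det := by
    set S1 := (pM x (k + 2)).submatrix Fin.succ ((1 : Fin (k + 2)).succAbove) with hS1def
    have hcol : ∀ i : Fin (k + 1), S1 i 0 = if (i : ℕ) = 0 then (-1 : ℝ) else 0 := by
      intro i
      rw [hS1def, Matrix.submatrix_apply, h10]
      simp only [pM, Matrix.of_apply, Fin.val_succ, Fin.val_zero]
      by_cases hi : (i : ℕ) = 0 <;> simp [hi]
    have hsub2 : S1.submatrix ((0 : Fin (k + 1)).succAbove) Fin.succ = pM x k := by
      ext i j
      rw [Matrix.submatrix_apply, Fin.zero_succAbove, hS1def, Matrix.submatrix_apply]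
      have hj : (1 : Fin (k + 2)).succAbove j.succ = j.succ.succ := by
        rw [Fin.succAbove_of_le_castSucc]
        · simp [Fin.le_def]
      rw [hj, pM_shift x (k + 1) i.succ j.succ, pM_shift x k i j]
    rw [Matrix.det_succ_column_zero, Fin.sum_univ_succ]
    have hrest : ∀ i : Fin k,
        (-1 : ℝ) ^ ((i.succ : Fin (k + 1)) : ℕ) * S1 i.succ 0 *
          (S1.submatrix (i.succ).succAbove Fin.succ).det = 0 := by
      intro i
      rw [hcol, if_neg (by simp [Fin.val_succ])]
      ring
    rw [Finset.sum_eq_zero fun i _ => hrest i, hcol, hsub2]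
    simp
  rw [Matrix.det_succ_row_zero, Fin.sum_univ_succ, Fin.sum_univ_succ]
  have hrest : ∀ j : Fin k,
      (-1 : ℝ) ^ (((j.succ.succ : Fin (k + 2))) : ℕ) * pM x (k + 2) 0 j.succ.succ *
        ((pM x (k + 2)).submatrix Fin.succ (j.succ.succ).succAbove).det = 0 := by
    intro j
    have hz : pM x (k + 2) 0 j.succ.succ = 0 := by
      simp only [pM, Matrix.of_apply, Fin.val_succ, Fin.val_zero]
      simp
    rw [hz]; ring
  rw [Finset.sum_eq_zero fun j _ => hrest j]
  have hone : ((0 : Fin (k + 1)).succ : Fin (k + 2)) = 1 := by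
    ext; simp
  rw [hone, h00, h01, hsub0, hS1]
  norm_num
  ring

lemma det_pM (x : ℝ) (k : ℕ) : (pM x k).det = t x k := by
  have key : ∀ k : ℕ, (pM x k).det = t x k ∧ (pM x (k + 1)).det = t x (k + 1) := by
    intro k
    induction k with
    | zero =>
      constructor
      · rw [det_pM_zero]; simpa using (t_zero x).symm
      · rw [det_pM_one]
        have h := t_rec' x (-1)
        rw [show (-1 : ℤ) + 2 = 1 by norm_num, show (-1 : ℤ) + 1 = 0 by norm_num,
          t_neg_one, t_zero] at h
        rw [show ((0 : ℕ) : ℤ) + 1 = 1 by norm_num, h]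
        ring
    | succ k ih =>
      refine ⟨ih.2, ?_⟩
      have h := det_pM_rec x k
      rw [ih.1, ih.2] at h
      have h2 := t_rec' x (k : ℤ)
      push_cast
      rw [show ((k : ℤ) + 1 + 1) = (k : ℤ) + 2 by ring]
      rw [h2]
      push_cast at h
      rw [h]
  exact (key k).1

lemma split_disj {P Q R S : Prop} [Decidable P] [Decidable Q] [Decidable R] [Decidable S]
    (h : ¬(P ∧ Q ∧ R ∧ S)) :
    (if (P ∧ Q) ∨ (R ∧ S) then (1 : ℝ) else 0)
      = (if P then (1 : ℝ) else 0) * (if Q then 1 else 0)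
        + (if R then 1 else 0) * (if S then 1 else 0) := by
  by_cases hP : P <;> by_cases hQ : Q <;> by_cases hR : R <;> by_cases hS : S <;> simp_all

lemma sum_boole_unique {α : Type*} [Fintype α] (P : α → Prop) [DecidablePred P]
    (h : ∀ j j', P j → P j' → j = j') :
    (∑ j, if P j then (1 : ℝ) else 0) = if ∃ j, P j then 1 else 0 := by
  by_cases he : ∃ j, P j
  · obtain ⟨j₀, hj₀⟩ := he
    rw [if_pos ⟨j₀, hj₀⟩, Finset.sum_eq_single j₀]
    · rw [if_pos hj₀]
    · intro b _ hb
      rw [if_neg fun hPb => hb (h b j₀ hPb hj₀)]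
    · intro hj; exact absurd (Finset.mem_univ _) hj
  · rw [if_neg he, Finset.sum_eq_zero]
    intro j _
    rw [if_neg fun hPj => he ⟨j, hPj⟩]

lemma strong_inj {n m d : ℕ} (ε : Fin m → Fin n × Fin n)
    (hreg : ∀ u : Fin n, ∑ v : Fin n, edgeListAdj ε u v = d) (hm : 2 * m = n * d) :
    Function.Injective fun j => Sym2.mk (ε j).1 (ε j).2 := by
  classical
  intro j j' hjj
  by_contra hne
  have hsym : ε j' = ε j ∨ ε j' = (ε j).swap := by
    rcases Sym2.eq_iff.1 hjj with ⟨h1, h2⟩ | ⟨h1, h2⟩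
    · left; exact Prod.ext h1.symm h2.symm
    · right; exact Prod.ext h2.symm h1.symm
  set c : Fin n → Fin n → ℝ := fun u v =>
    ∑ i, if ε i = (u, v) ∨ ε i = (v, u) then (1 : ℝ) else 0 with hc
  have hA : ∀ u v, edgeListAdj ε u v ≤ c u v := by
    intro u v
    by_cases he : ∃ i, ε i = (u, v) ∨ ε i = (v, u)
    · obtain ⟨i0, hi0⟩ := he
      have h1 : edgeListAdj ε u v = 1 := by simp only [edgeListAdj]; rw [if_pos ⟨i0, hi0⟩]
      rw [h1]
      have := Finset.single_le_sum (s := Finset.univ)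
        (f := fun i => if ε i = (u, v) ∨ ε i = (v, u) then (1 : ℝ) else 0)
        (fun i _ => by split_ifs <;> norm_num) (Finset.mem_univ i0)
      simp only [if_pos hi0] at this
      exact this
    · have h1 : edgeListAdj ε u v = 0 := by simp only [edgeListAdj]; rw [if_neg he]
      rw [h1]
      exact Finset.sum_nonneg fun i _ => by split_ifs <;> norm_num
  have hB : edgeListAdj ε (ε j).1 (ε j).2 < c (ε j).1 (ε j).2 := by
    have hle1 : edgeListAdj ε (ε j).1 (ε j).2 ≤ 1 := by
      simp only [edgeListAdj]; split_ifs <;> norm_num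
    have t1 : (if ε j = ((ε j).1, (ε j).2) ∨ ε j = ((ε j).2, (ε j).1) then (1 : ℝ) else 0) = 1 :=
      if_pos (Or.inl rfl)
    have t2 : (if ε j' = ((ε j).1, (ε j).2) ∨ ε j' = ((ε j).2, (ε j).1) then (1 : ℝ) else 0)
        = 1 := if_pos (by rcases hsym with h | h; exact Or.inl h; exact Or.inr h)
    have hsub : ∑ i ∈ ({j, j'} : Finset (Fin m)),
        (if ε i = ((ε j).1, (ε j).2) ∨ ε i = ((ε j).2, (ε j).1) then (1 : ℝ) else 0)
          ≤ c (ε j).1 (ε j).2 :=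
      Finset.sum_le_sum_of_subset_of_nonneg (Finset.subset_univ _)
        (fun i _ _ => by split_ifs <;> norm_num)
    rw [Finset.sum_pair hne, t1, t2] at hsub
    linarith
  have hlt : ∑ u, ∑ v, edgeListAdj ε u v < ∑ u, ∑ v, c u v :=
    Finset.sum_lt_sum (fun u _ => Finset.sum_le_sum fun v _ => hA u v)
      ⟨(ε j).1, Finset.mem_univ _,
        Finset.sum_lt_sum (fun v _ => hA _ v) ⟨(ε j).2, Finset.mem_univ _, hB⟩⟩
  have hL : ∑ u, ∑ v, edgeListAdj ε u v = (n : ℝ) * d := by simp [hreg]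
  have hC : ∑ u, ∑ v, c u v ≤ 2 * m := by
    calc ∑ u, ∑ v, c u v ≤ ∑ u, ∑ v, ∑ i, ((if ε i = (u, v) then (1 : ℝ) else 0)
          + (if ε i = (v, u) then 1 else 0)) := by
          apply Finset.sum_le_sum; intro u _; apply Finset.sum_le_sum; intro v _
          apply Finset.sum_le_sum; intro i _
          by_cases h1 : ε i = (u, v) <;> by_cases h2 : ε i = (v, u) <;> simp [h1, h2] <;> split_ifs <;> norm_num
      _ = ∑ i, ∑ u, ∑ v, ((if ε i = (u, v) then (1 : ℝ) else 0)
          + (if ε i = (v, u) then 1 else 0)) := by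
          rw [Finset.sum_congr rfl fun u _ => Finset.sum_comm, Finset.sum_comm]
      _ = ∑ i : Fin m, (2 : ℝ) := Finset.sum_congr rfl fun i _ => by
          generalize ε i = p
          obtain ⟨a, b⟩ := p
          simp [Finset.sum_add_distrib, ite_and]
          norm_num
      _ = 2 * m := by simp; ring
  have hm' : (2 : ℝ) * m = n * d := by exact_mod_cast hm
  linarith

section Graph

variable {n m : ℕ} (ε : Fin m → Fin n × Fin n)

lemma edge_unique (hinj : Function.Injective fun j => Sym2.mk (ε j).1 (ε j).2) (u v : Fin n) :
    ∀ j j', (ε j = (u, v) ∨ ε j = (v, u)) → (ε j' = (u, v) ∨ ε j' = (v, u)) → j = j' := by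
  intro j j' hj hj'
  apply hinj
  show Sym2.mk (ε j).1 (ε j).2 = Sym2.mk (ε j').1 (ε j').2
  rcases hj with h | h <;> rcases hj' with h' | h' <;> rw [h, h'] <;>
    first | rfl | exact Sym2.eq_swap | exact Sym2.eq_swap.symm

lemma edgeListAdj_eq_sum (hloop : ∀ j, (ε j).1 ≠ (ε j).2)
    (hinj : Function.Injective fun j => Sym2.mk (ε j).1 (ε j).2) (u v : Fin n) :
    edgeListAdj ε u v = ∑ j, if ε j = (u, v) ∨ ε j = (v, u) then (1 : ℝ) else 0 := by
  classical
  rw [sum_boole_unique _ (edge_unique ε hinj u v)]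
  by_cases he : ∃ j, ε j = (u, v) ∨ ε j = (v, u) <;> simp [edgeListAdj, he]

lemma sum_deg (hloop : ∀ j, (ε j).1 ≠ (ε j).2)
    (hinj : Function.Injective fun j => Sym2.mk (ε j).1 (ε j).2)
    {d : ℕ} (hreg : ∀ u : Fin n, ∑ v : Fin n, edgeListAdj ε u v = d) (u : Fin n) :
    ∑ j, ((if (ε j).1 = u then (1 : ℝ) else 0) + (if (ε j).2 = u then 1 else 0)) = d := by
  classical
  have h1 : ∀ v : Fin n, edgeListAdj ε u v
      = ∑ j, ((if ε j = (u, v) then (1 : ℝ) else 0) + (if ε j = (v, u) then 1 else 0)) := by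
    intro v
    rw [edgeListAdj_eq_sum ε hloop hinj u v]
    apply Finset.sum_congr rfl
    intro j _
    have hl := hloop j
    by_cases h1 : ε j = (u, v) <;> by_cases h2 : ε j = (v, u)
    · exfalso
      rw [h1] at h2
      have h3 : u = v := congrArg Prod.fst h2
      rw [h1] at hl
      exact hl h3
    · rw [if_pos (Or.inl h1), if_pos h1, if_neg h2]; ring
    · rw [if_pos (Or.inr h2), if_neg h1, if_pos h2]; ring
    · rw [if_neg (by tauto), if_neg h1, if_neg h2]; ring
  have h2 : (d : ℝ) = ∑ v, ∑ j, ((if ε j = (u, v) then (1 : ℝ) else 0)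
      + (if ε j = (v, u) then 1 else 0)) := by
    rw [← Finset.sum_congr rfl fun v _ => h1 v, hreg u]
  rw [Finset.sum_comm] at h2
  rw [h2]
  apply Finset.sum_congr rfl
  intro j _
  rw [Finset.sum_add_distrib]
  have e1 : (∑ v : Fin n, if ε j = (u, v) then (1 : ℝ) else 0)
      = if (ε j).1 = u then 1 else 0 := by
    by_cases hu : (ε j).1 = u
    · rw [if_pos hu]
      rw [Finset.sum_congr rfl (fun v _ => if_congr
        (show ε j = (u, v) ↔ (ε j).2 = v by
          constructor
          · intro h; rw [h]
          · intro h; exact Prod.ext hu h) rfl rfl)]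
      simp
    · rw [if_neg hu, Finset.sum_eq_zero]
      intro v _
      rw [if_neg]
      intro h
      exact hu (by rw [h])
  have e2 : (∑ v : Fin n, if ε j = (v, u) then (1 : ℝ) else 0)
      = if (ε j).2 = u then 1 else 0 := by
    by_cases hu : (ε j).2 = u
    · rw [if_pos hu]
      rw [Finset.sum_congr rfl (fun v _ => if_congr
        (show ε j = (v, u) ↔ (ε j).1 = v by
          constructor
          · intro h; rw [h]
          · intro h; exact Prod.ext h hu) rfl rfl)]
      simp
    · rw [if_neg hu, Finset.sum_eq_zero]
      intro v _
      rw [if_neg]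
      intro h
      exact hu (by rw [h])
  rw [e1, e2]

lemma sum_diag (hloop : ∀ j, (ε j).1 ≠ (ε j).2)
    (hinj : Function.Injective fun j => Sym2.mk (ε j).1 (ε j).2)
    {d : ℕ} (hreg : ∀ u : Fin n, ∑ v : Fin n, edgeListAdj ε u v = d) (u v : Fin n) :
    ∑ j, ((if (ε j).1 = u then (1 : ℝ) else 0) * (if (ε j).1 = v then 1 else 0)
        + (if (ε j).2 = u then 1 else 0) * (if (ε j).2 = v then 1 else 0))
      = if u = v then (d : ℝ) else 0 := by
  by_cases huv : u = v
  · subst huv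
    rw [if_pos rfl, ← sum_deg ε hloop hinj hreg u]
    apply Finset.sum_congr rfl
    intro j _
    by_cases h1 : (ε j).1 = u <;> by_cases h2 : (ε j).2 = u <;> simp [h1, h2]
  · rw [if_neg huv, Finset.sum_eq_zero]
    intro j _
    by_cases h1 : (ε j).1 = u <;> by_cases h2 : (ε j).1 = v <;>
      by_cases h3 : (ε j).2 = u <;> by_cases h4 : (ε j).2 = v <;> simp_all

lemma sum_adj (hloop : ∀ j, (ε j).1 ≠ (ε j).2)
    (hinj : Function.Injective fun j => Sym2.mk (ε j).1 (ε j).2) (u v : Fin n) :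
    ∑ j, ((if (ε j).1 = u then (1 : ℝ) else 0) * (if (ε j).2 = v then 1 else 0)
        + (if (ε j).2 = u then 1 else 0) * (if (ε j).1 = v then 1 else 0))
      = edgeListAdj ε u v := by
  rw [edgeListAdj_eq_sum ε hloop hinj u v]
  apply Finset.sum_congr rfl
  intro j _
  have hl := hloop j
  by_cases h1 : (ε j).1 = u <;> by_cases h2 : (ε j).2 = v <;>
    by_cases h3 : (ε j).2 = u <;> by_cases h4 : (ε j).1 = v <;>
    simp_all [Prod.ext_iff]

end Graph

section Blocks

variable {n m : ℕ} (ε : Fin m → Fin n × Fin n) (k : ℕ) (x : ℝ)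

noncomputable def Bm : Matrix (Fin n) (Fin m × Fin k) ℝ :=
  Matrix.of fun u p =>
    -(if ((p.2 : ℕ) = 0 ∧ (ε p.1).1 = u) ∨ ((p.2 : ℕ) = k - 1 ∧ (ε p.1).2 = u)
      then (1 : ℝ) else 0)

noncomputable def Cm : Matrix (Fin m × Fin k) (Fin n) ℝ :=
  Matrix.of fun p u =>
    -(if ((p.2 : ℕ) = 0 ∧ (ε p.1).1 = u) ∨ ((p.2 : ℕ) = k - 1 ∧ (ε p.1).2 = u)
      then (1 : ℝ) else 0)

noncomputable def Dm (m k : ℕ) (x : ℝ) : Matrix (Fin m × Fin k) (Fin m × Fin k) ℝ :=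
  Matrix.of fun p q =>
    (if p = q then x else 0) -
      (if p.1 = q.1 ∧ ((p.2 : ℕ) + 1 = (q.2 : ℕ) ∨ (q.2 : ℕ) + 1 = (p.2 : ℕ)) then 1 else 0)

lemma blocks_eq :
    x • (1 : Matrix (Fin n ⊕ Fin m × Fin k) (Fin n ⊕ Fin m × Fin k) ℝ) - subdivisionAdj ε k
      = Matrix.fromBlocks (x • 1) (Bm ε k) (Cm ε k) (Dm m k x) := by
  ext a b
  cases a with
  | inl u =>
    cases b with
    | inl v =>
      simp [subdivisionAdj, Matrix.one_apply, Matrix.smul_apply, smul_eq_mul]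
    | inr p =>
      obtain ⟨j, i⟩ := p
      simp [subdivisionAdj, Bm, Matrix.one_apply]
  | inr p =>
    obtain ⟨j, i⟩ := p
    cases b with
    | inl v =>
      simp [subdivisionAdj, Cm, Matrix.one_apply]
    | inr q =>
      obtain ⟨j', i'⟩ := q
      simp only [Matrix.sub_apply, Matrix.smul_apply, Matrix.one_apply, smul_eq_mul,
        Matrix.fromBlocks_apply₂₂, subdivisionAdj, Dm, Matrix.of_apply]
      split_ifs <;> simp_all

lemma Dm_eq :
    Dm m k x = (Matrix.blockDiagonal fun _ : Fin m => pM x k).submatrix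
      (Equiv.prodComm (Fin m) (Fin k)) (Equiv.prodComm (Fin m) (Fin k)) := by
  ext p q
  obtain ⟨j, i⟩ := p
  obtain ⟨j', i'⟩ := q
  simp only [Dm, Matrix.of_apply, Matrix.submatrix_apply, Equiv.prodComm_apply, Prod.swap_prod_mk,
    Matrix.blockDiagonal_apply]
  by_cases h : j = j'
  · subst h
    rw [if_pos rfl]
    simp [pM, Prod.ext_iff, Fin.ext_iff]
  · rw [if_neg h, if_neg (by simp [Prod.ext_iff, h]), if_neg (by tauto)]
    ring

lemma det_Dm : (Dm m k x).det = (t x k) ^ m := by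
  rw [Dm_eq, Matrix.det_submatrix_equiv_self, Matrix.det_blockDiagonal]
  simp [det_pM]

noncomputable def Z0 : Matrix (Fin m × Fin k) (Fin n) ℝ :=
  Matrix.of fun p v =>
    -((if (ε p.1).1 = v then (1 : ℝ) else 0) * t x ((k : ℤ) - 1 - (p.2 : ℕ))
      + (if (ε p.1).2 = v then 1 else 0) * t x ((p.2 : ℕ) : ℤ))

lemma row_sum {k : ℕ} (x : ℝ) (f : ℤ → ℝ)
    (hf : ∀ j : ℤ, x * f j = f (j + 1) + f (j - 1)) (i : Fin k) :
    x * f (i : ℕ) - ∑ i' : Fin k,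
        (if (i : ℕ) + 1 = (i' : ℕ) ∨ (i' : ℕ) + 1 = (i : ℕ) then (1 : ℝ) else 0) * f (i' : ℕ)
      = (if (i : ℕ) = 0 then f (-1) else 0) + (if (i : ℕ) = k - 1 then f k else 0) := by
  have hik := i.isLt
  have hsplit : ∀ i' : Fin k,
      (if (i : ℕ) + 1 = (i' : ℕ) ∨ (i' : ℕ) + 1 = (i : ℕ) then (1 : ℝ) else 0) * f (i' : ℕ)
        = (if (i : ℕ) + 1 = (i' : ℕ) then (1 : ℝ) else 0) * f (i' : ℕ)
          + (if (i' : ℕ) + 1 = (i : ℕ) then (1 : ℝ) else 0) * f (i' : ℕ) := by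
    intro i'
    by_cases h1 : (i : ℕ) + 1 = (i' : ℕ) <;> by_cases h2 : (i' : ℕ) + 1 = (i : ℕ)
    · exfalso; omega
    · simp [h1, h2]
    · simp [h1, h2]
    · simp [h1, h2]
  rw [Finset.sum_congr rfl fun i' _ => hsplit i', Finset.sum_add_distrib]
  have hA : (∑ i' : Fin k, (if (i : ℕ) + 1 = (i' : ℕ) then (1 : ℝ) else 0) * f (i' : ℕ))
      = if (i : ℕ) + 1 < k then f ((i : ℕ) + 1) else 0 := by
    by_cases h : (i : ℕ) + 1 < k
    · rw [if_pos h, Finset.sum_eq_single (⟨(i : ℕ) + 1, h⟩ : Fin k)]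
      · norm_num
      · intro b _ hb
        rw [if_neg, zero_mul]
        intro hc
        exact hb (Fin.ext hc.symm)
      · intro h'; exact absurd (Finset.mem_univ _) h'
    · rw [if_neg h, Finset.sum_eq_zero]
      intro b _
      have hb := b.isLt
      rw [if_neg (by omega), zero_mul]
  have hB : (∑ i' : Fin k, (if (i' : ℕ) + 1 = (i : ℕ) then (1 : ℝ) else 0) * f (i' : ℕ))
      = if 0 < (i : ℕ) then f ((i : ℕ) - 1 : ℤ) else 0 := by
    by_cases h : 0 < (i : ℕ)
    · rw [if_pos h, Finset.sum_eq_single (⟨(i : ℕ) - 1, by omega⟩ : Fin k)]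
      · rw [if_pos (by simp; omega), one_mul]
        congr 1
        simp
        omega
      · intro b _ hb
        rw [if_neg, zero_mul]
        intro hc
        exact hb (Fin.ext (by simp; omega))
      · intro h'; exact absurd (Finset.mem_univ _) h'
    · rw [if_neg h, Finset.sum_eq_zero]
      intro b _
      rw [if_neg (by omega), zero_mul]
  rw [hA, hB]
  have hrec := hf (i : ℕ)
  by_cases h1 : (i : ℕ) + 1 < k <;> by_cases h2 : 0 < (i : ℕ)
  · rw [if_pos h1, if_pos h2, if_neg (by omega), if_neg (by omega)]
    push_cast
    linarith
  · rw [if_pos h1, if_neg h2, if_pos (by omega), if_neg (by omega)]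
    have he : ((i : ℕ) : ℤ) - 1 = -1 := by omega
    rw [he] at hrec
    push_cast
    linarith
  · rw [if_neg h1, if_pos h2, if_neg (by omega), if_pos (by omega)]
    have he : ((i : ℕ) : ℤ) + 1 = (k : ℤ) := by omega
    rw [he] at hrec
    linarith
  · rw [if_neg h1, if_neg h2, if_pos (by omega), if_pos (by omega)]
    have he : ((i : ℕ) : ℤ) + 1 = (k : ℤ) := by omega
    have he' : ((i : ℕ) : ℤ) - 1 = -1 := by omega
    rw [he, he'] at hrec
    linarith

lemma D_mul_Z0 (hk : 0 < k) (hloop : ∀ j, (ε j).1 ≠ (ε j).2) :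
    Dm m k x * Z0 ε k x = t x k • Cm ε k := by
  ext p v
  obtain ⟨j, i⟩ := p
  rw [Matrix.mul_apply, Fintype.sum_prod_type]
  rw [Finset.sum_eq_single j]
  · set a : ℝ := if (ε j).1 = v then 1 else 0 with ha
    set b : ℝ := if (ε j).2 = v then 1 else 0 with hb
    set f : ℤ → ℝ := fun jj => -(a * t x ((k : ℤ) - 1 - jj) + b * t x jj) with hfdef
    have hZ : ∀ i' : Fin k, Z0 ε k x (j, i') v = f ((i' : ℕ) : ℤ) := fun i' => rfl
    have hf : ∀ jj : ℤ, x * f jj = f (jj + 1) + f (jj - 1) := by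
      intro jj
      have r1 := t_rec x ((k : ℤ) - 1 - jj)
      have r2 := t_rec x jj
      have e1 : (k : ℤ) - 1 - (jj + 1) = ((k : ℤ) - 1 - jj) - 1 := by ring
      have e2 : (k : ℤ) - 1 - (jj - 1) = ((k : ℤ) - 1 - jj) + 1 := by ring
      simp only [hfdef, e1, e2]
      linear_combination (-a) * r1 + (-b) * r2
    have hD : ∀ i' : Fin k, Dm m k x (j, i) (j, i')
        = (if i = i' then x else 0)
          - (if (i : ℕ) + 1 = (i' : ℕ) ∨ (i' : ℕ) + 1 = (i : ℕ) then 1 else 0) := by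
      intro i'
      simp [Dm, Prod.ext_iff]
    calc (∑ i' : Fin k, Dm m k x (j, i) (j, i') * Z0 ε k x (j, i') v)
        = ∑ i' : Fin k, ((if i = i' then x * f ((i' : ℕ) : ℤ) else 0)
            - (if (i : ℕ) + 1 = (i' : ℕ) ∨ (i' : ℕ) + 1 = (i : ℕ) then (1 : ℝ) else 0)
              * f ((i' : ℕ) : ℤ)) := by
          apply Finset.sum_congr rfl
          intro i' _
          rw [hD, hZ, sub_mul, ite_mul, zero_mul]
      _ = x * f ((i : ℕ) : ℤ) - ∑ i' : Fin k,
            (if (i : ℕ) + 1 = (i' : ℕ) ∨ (i' : ℕ) + 1 = (i : ℕ) then (1 : ℝ) else 0)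
              * f ((i' : ℕ) : ℤ) := by
          rw [Finset.sum_sub_distrib, Finset.sum_ite_eq]
          simp
      _ = (if (i : ℕ) = 0 then f (-1) else 0) + (if (i : ℕ) = k - 1 then f (k : ℤ) else 0) :=
          row_sum x f hf i
      _ = t x k • Cm ε k (j, i) v := by
          have hfm : f (-1) = -(a * t x k) := by
            simp only [hfdef]
            rw [show (k : ℤ) - 1 - (-1) = (k : ℤ) by ring, t_neg_one]
            ring
          have hfk : f (k : ℤ) = -(b * t x k) := by
            simp only [hfdef]
            rw [show (k : ℤ) - 1 - (k : ℤ) = (-1 : ℤ) by ring, t_neg_one]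
            ring
          rw [hfm, hfk]
          simp only [Matrix.smul_apply, Cm, Matrix.of_apply, smul_eq_mul]
          rw [split_disj (by
            rintro ⟨h0, hA, h1, hB⟩
            exact hloop j (hA.trans hB.symm))]
          simp only [ha, hb]
          split_ifs <;> ring
  · intro j' _ hj'
    rw [Finset.sum_eq_zero]
    intro i' _
    have : Dm m k x (j, i) (j', i') = 0 := by
      simp only [Dm, Matrix.of_apply]
      rw [if_neg (by simp [Prod.ext_iff]; intro h; exact absurd h.symm hj'),
        if_neg (by rintro ⟨h, -⟩; exact hj' h.symm)]
      ring
    rw [this, zero_mul]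
  · intro h; exact absurd (Finset.mem_univ _) h

lemma B_mul_Z0 (hk : 0 < k) (hloop : ∀ j, (ε j).1 ≠ (ε j).2)
    (hinj : Function.Injective fun j => Sym2.mk (ε j).1 (ε j).2)
    {d : ℕ} (hreg : ∀ u : Fin n, ∑ v : Fin n, edgeListAdj ε u v = d) :
    Bm ε k * Z0 ε k x
      = (t x ((k : ℤ) - 1) * d) • (1 : Matrix (Fin n) (Fin n) ℝ) + edgeListAdj ε := by
  ext u v
  rw [Matrix.mul_apply, Fintype.sum_prod_type]
  have hinner : ∀ j : Fin m, (∑ i : Fin k, Bm ε k u (j, i) * Z0 ε k x (j, i) v)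
      = t x ((k : ℤ) - 1) * ((if (ε j).1 = u then (1 : ℝ) else 0) * (if (ε j).1 = v then 1 else 0)
          + (if (ε j).2 = u then 1 else 0) * (if (ε j).2 = v then 1 else 0))
        + ((if (ε j).1 = u then (1 : ℝ) else 0) * (if (ε j).2 = v then 1 else 0)
          + (if (ε j).2 = u then 1 else 0) * (if (ε j).1 = v then 1 else 0)) := by
    intro j
    set au : ℝ := if (ε j).1 = u then 1 else 0 with hau
    set bu : ℝ := if (ε j).2 = u then 1 else 0 with hbu
    set av : ℝ := if (ε j).1 = v then 1 else 0 with hav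
    set bv : ℝ := if (ε j).2 = v then 1 else 0 with hbv
    have hterm : ∀ i : Fin k, Bm ε k u (j, i) * Z0 ε k x (j, i) v
        = (if (i : ℕ) = 0 then au * (av * t x ((k : ℤ) - 1 - (i : ℕ)) + bv * t x ((i : ℕ) : ℤ))
            else 0)
          + (if (i : ℕ) = k - 1 then
              bu * (av * t x ((k : ℤ) - 1 - (i : ℕ)) + bv * t x ((i : ℕ) : ℤ)) else 0) := by
      intro i
      have hBsplit : Bm ε k u (j, i)
          = -((if (i : ℕ) = 0 then (1 : ℝ) else 0) * au
            + (if (i : ℕ) = k - 1 then 1 else 0) * bu) := by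
        simp only [Bm, Matrix.of_apply]
        rw [split_disj (by
          rintro ⟨h0, hA, h1, hB⟩
          exact hloop j (hA.trans hB.symm))]
      have hZv : Z0 ε k x (j, i) v
          = -(av * t x ((k : ℤ) - 1 - (i : ℕ)) + bv * t x ((i : ℕ) : ℤ)) := rfl
      rw [hBsplit, hZv, neg_mul_neg]
      split_ifs <;> ring
    rw [Finset.sum_congr rfl fun i _ => hterm i, Finset.sum_add_distrib]
    have sum0 : ∀ g : Fin k → ℝ, (∑ i : Fin k, (if (i : ℕ) = 0 then g i else 0))
        = g ⟨0, hk⟩ := by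
      intro g
      rw [Finset.sum_eq_single (⟨0, hk⟩ : Fin k)]
      · simp
      · intro b _ hb
        rw [if_neg]
        intro hc
        exact hb (Fin.ext hc)
      · intro h'; exact absurd (Finset.mem_univ _) h'
    have sumk : ∀ g : Fin k → ℝ, (∑ i : Fin k, (if (i : ℕ) = k - 1 then g i else 0))
        = g ⟨k - 1, by omega⟩ := by
      intro g
      rw [Finset.sum_eq_single (⟨k - 1, by omega⟩ : Fin k)]
      · simp
      · intro b _ hb
        rw [if_neg]
        intro hc
        exact hb (Fin.ext hc)
      · intro h'; exact absurd (Finset.mem_univ _) h'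
    calc (∑ i : Fin k, (if (i : ℕ) = 0 then
              au * (av * t x ((k : ℤ) - 1 - (i : ℕ)) + bv * t x ((i : ℕ) : ℤ)) else 0))
          + (∑ i : Fin k, (if (i : ℕ) = k - 1 then
              bu * (av * t x ((k : ℤ) - 1 - (i : ℕ)) + bv * t x ((i : ℕ) : ℤ)) else 0))
        = au * (av * t x ((k : ℤ) - 1 - ((0 : ℕ) : ℤ)) + bv * t x ((0 : ℕ) : ℤ))
          + bu * (av * t x ((k : ℤ) - 1 - ((k - 1 : ℕ) : ℤ)) + bv * t x ((k - 1 : ℕ) : ℤ)) := by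
          rw [sum0 (fun i : Fin k =>
              au * (av * t x ((k : ℤ) - 1 - (i : ℕ)) + bv * t x ((i : ℕ) : ℤ))),
            sumk (fun i : Fin k =>
              bu * (av * t x ((k : ℤ) - 1 - (i : ℕ)) + bv * t x ((i : ℕ) : ℤ)))]
      _ = t x ((k : ℤ) - 1) * (au * av + bu * bv) + (au * bv + bu * av) := by
          have h2 : (k : ℤ) - 1 - ((k - 1 : ℕ) : ℤ) = 0 := by omega
          have h3 : ((k - 1 : ℕ) : ℤ) = (k : ℤ) - 1 := by omega
          have h4 : (k : ℤ) - 1 - ((0 : ℕ) : ℤ) = (k : ℤ) - 1 := by simp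
          have h5 : ((0 : ℕ) : ℤ) = (0 : ℤ) := by simp
          rw [h2, h3, h4, h5, t_zero]
          ring
  rw [Finset.sum_congr rfl fun j _ => hinner j, Finset.sum_add_distrib, ← Finset.mul_sum]
  rw [sum_diag ε hloop hinj hreg u v, sum_adj ε hloop hinj u v]
  simp only [Matrix.add_apply, Matrix.smul_apply, Matrix.one_apply, smul_eq_mul, mul_ite,
    mul_one, mul_zero]

end Blocks

lemma main_aux {n m d k : ℕ} (hk : 0 < k)
    (ε : Fin m → Fin n × Fin n)
    (hloop : ∀ j, (ε j).1 ≠ (ε j).2)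
    (hinj : Function.Injective fun j => Sym2.mk (ε j).1 (ε j).2)
    (hreg : ∀ u : Fin n, ∑ v : Fin n, edgeListAdj ε u v = d)
    (x : ℝ) (hU : t x k ≠ 0) :
    (x • (1 : Matrix (Fin n ⊕ Fin m × Fin k) (Fin n ⊕ Fin m × Fin k) ℝ)
        - subdivisionAdj ε k).det * (t x k) ^ n
      = (t x k) ^ m *
        ((x * t x k - d * t x ((k : ℤ) - 1)) • (1 : Matrix (Fin n) (Fin n) ℝ)
          - edgeListAdj ε).det := by
  have hdet : IsUnit (Dm m k x).det := by
    rw [det_Dm]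
    exact ((isUnit_iff_ne_zero.2 hU).pow m)
  haveI := Matrix.invertibleOfIsUnitDet _ hdet
  rw [blocks_eq, Matrix.det_fromBlocks₂₂]
  have hDZ := D_mul_Z0 ε k x hk hloop
  have hBDC : Bm ε k * ⅟(Dm m k x) * Cm ε k = (t x k)⁻¹ • (Bm ε k * Z0 ε k x) := by
    rw [Matrix.invOf_eq_nonsing_inv, Matrix.mul_assoc]
    have h3 : (Dm m k x)⁻¹ * (Dm m k x * Z0 ε k x) = Z0 ε k x := by
      rw [← Matrix.mul_assoc, Matrix.nonsing_inv_mul _ hdet, Matrix.one_mul]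
    rw [hDZ, Matrix.mul_smul] at h3
    have h4 : (Dm m k x)⁻¹ * Cm ε k = (t x k)⁻¹ • Z0 ε k x := by
      rw [← h3, smul_smul, inv_mul_cancel₀ hU, one_smul]
    rw [h4, Matrix.mul_smul]
  rw [hBDC, B_mul_Z0 ε k x hk hloop hinj hreg, det_Dm]
  have hM : (t x k) • (x • (1 : Matrix (Fin n) (Fin n) ℝ)
      - (t x k)⁻¹ • ((t x ((k : ℤ) - 1) * d) • (1 : Matrix (Fin n) (Fin n) ℝ) + edgeListAdj ε))
      = (x * t x k - d * t x ((k : ℤ) - 1)) • (1 : Matrix (Fin n) (Fin n) ℝ)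
        - edgeListAdj ε := by
    have h5 : t x k • (t x k)⁻¹ • ((t x ((k : ℤ) - 1) * d) • (1 : Matrix (Fin n) (Fin n) ℝ)
        + edgeListAdj ε) = (t x ((k : ℤ) - 1) * d) • (1 : Matrix (Fin n) (Fin n) ℝ)
          + edgeListAdj ε := by
      rw [smul_smul, mul_inv_cancel₀ hU, one_smul]
    rw [smul_sub, h5, smul_smul, sub_add_eq_sub_sub, ← sub_smul,
      show t x k * x - t x ((k : ℤ) - 1) * d = x * t x k - d * t x ((k : ℤ) - 1) by ring]
  calc (t x k) ^ m * (x • (1 : Matrix (Fin n) (Fin n) ℝ)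
        - (t x k)⁻¹ • ((t x ((k : ℤ) - 1) * d) • (1 : Matrix (Fin n) (Fin n) ℝ)
          + edgeListAdj ε)).det * (t x k) ^ n
      = (t x k) ^ m * ((t x k) • (x • (1 : Matrix (Fin n) (Fin n) ℝ)
          - (t x k)⁻¹ • ((t x ((k : ℤ) - 1) * d) • (1 : Matrix (Fin n) (Fin n) ℝ)
            + edgeListAdj ε))).det := by
        rw [Matrix.det_smul, Fintype.card_fin]
        ring
    _ = _ := by rw [hM]

end CPSubAux

theorem charpoly_subdivision {n m d k : ℕ} (hk : 0 < k)
    (ε : Fin m → Fin n × Fin n)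
    (hloop : ∀ j, (ε j).1 ≠ (ε j).2)
    (hinj : Function.Injective fun j => Sym2.mk (ε j))
    (hreg : ∀ u : Fin n, ∑ v : Fin n, edgeListAdj ε u v = d)
    (hm : 2 * m = n * d) (x : ℝ) :
    (x • (1 : Matrix (Fin n ⊕ Fin m × Fin k) (Fin n ⊕ Fin m × Fin k) ℝ)
        - subdivisionAdj ε k).det * ((Polynomial.Chebyshev.U ℝ k).eval (x / 2)) ^ n
      = ((Polynomial.Chebyshev.U ℝ k).eval (x / 2)) ^ m *
        ((x * (Polynomial.Chebyshev.U ℝ k).eval (x / 2)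
            - d * (Polynomial.Chebyshev.U ℝ ((k : ℤ) - 1)).eval (x / 2))
              • (1 : Matrix (Fin n) (Fin n) ℝ) - edgeListAdj ε).det := by
  classical
  set q : Polynomial ℝ := (Polynomial.Chebyshev.U ℝ (k : ℤ)).comp
    (Polynomial.C (2⁻¹ : ℝ) * Polynomial.X) with hq_def
  have heval : ∀ y : ℝ, q.eval y = CPSubAux.t y k := by
    intro y
    simp only [hq_def, eval_comp, eval_mul, eval_C, eval_X, CPSubAux.t]
    rw [show (2⁻¹ : ℝ) * y = y / 2 by ring]
  have hq : q ≠ 0 := by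
    intro h
    have h2 : q.eval 2 = 0 := by rw [h]; simp
    rw [heval 2, CPSubAux.t_two_eval k] at h2
    have : (0 : ℝ) < (k : ℝ) + 1 := by positivity
    linarith
  have hdense : Dense {y : ℝ | ¬ q.IsRoot y} := by
    have hfin : Set.Finite {y : ℝ | q.IsRoot y} := Polynomial.finite_setOf_isRoot hq
    have : {y : ℝ | ¬ q.IsRoot y} = {y : ℝ | q.IsRoot y}ᶜ := rfl
    rw [this]
    exact Set.Countable.dense_compl ℝ hfin.countable
  have hcontT : ∀ j : ℤ, Continuous fun y : ℝ => CPSubAux.t y j := by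
    intro j
    exact (Polynomial.Chebyshev.U ℝ j).continuous.comp (continuous_id.div_const 2)
  have hF : Continuous fun y : ℝ =>
      (y • (1 : Matrix (Fin n ⊕ Fin m × Fin k) (Fin n ⊕ Fin m × Fin k) ℝ)
        - subdivisionAdj ε k).det * (CPSubAux.t y k) ^ n := by
    apply Continuous.mul
    · apply Continuous.matrix_det
      apply continuous_matrix
      intro i j
      simp only [Matrix.sub_apply, Matrix.smul_apply, smul_eq_mul]
      exact (continuous_id.mul continuous_const).sub continuous_const
    · exact (hcontT k).pow n
  have hG : Continuous fun y : ℝ => (CPSubAux.t y k) ^ m *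
      ((y * CPSubAux.t y k - d * CPSubAux.t y ((k : ℤ) - 1)) • (1 : Matrix (Fin n) (Fin n) ℝ)
        - edgeListAdj ε).det := by
    apply Continuous.mul
    · exact (hcontT k).pow m
    · apply Continuous.matrix_det
      apply continuous_matrix
      intro i j
      simp only [Matrix.sub_apply, Matrix.smul_apply, smul_eq_mul]
      exact (((continuous_id.mul (hcontT k)).sub
        (continuous_const.mul (hcontT ((k : ℤ) - 1)))).mul continuous_const).sub
        continuous_const
  have hEq := Continuous.ext_on hdense hF hG (fun y hy => by
    have hU : CPSubAux.t y k ≠ 0 := by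
      intro h0
      exact hy (by rwa [Polynomial.IsRoot, heval y])
    exact CPSubAux.main_aux hk ε hloop (CPSubAux.strong_inj ε hreg hm) hreg y hU)
  have := congrFun hEq x
  simpa only [CPSubAux.t] using this
end

section
/- Let n ≥ 3 and 1 ≤ k, ℓ < n/2 with k ≠ ℓ. The eigenvalues of the I-graph I(n; k, ℓ) are exactly, for j = 1, …, n, the 2n numbers cos(2jkπ/n) + cos(2jℓπ/n) ± sqrt((cos(2jkπ/n) − cos(2jℓπ/n))² + 1). -/
open Matrix Real

/-- Adjacency matrix of the circulant graph `C_n(k)` on `ZMod n`,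
with edges `{u, u ± k}`, over `ℝ`. -/
def circulantAdjR (n k : ℕ) [NeZero n] : Matrix (ZMod n) (ZMod n) ℝ :=
  fun u v => if v = u + (k : ZMod n) ∨ v = u - (k : ZMod n) then 1 else 0

/-- Adjacency matrix of the I-graph `I(n; k, l)`. -/
def IGraphAdj (n k l : ℕ) [NeZero n] :
    Matrix (ZMod n ⊕ ZMod n) (ZMod n ⊕ ZMod n) ℝ :=
  Matrix.fromBlocks (circulantAdjR n k) 1 1 (circulantAdjR n l)

noncomputable def zetaC (n : ℕ) : ℂ := Complex.exp (2 * Real.pi * Complex.I / n)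

noncomputable def eZ (n : ℕ) [NeZero n] (a : ZMod n) : ℂ := zetaC n ^ a.val

lemma zetaC_prim (n : ℕ) [NeZero n] : IsPrimitiveRoot (zetaC n) n :=
  Complex.isPrimitiveRoot_exp n (NeZero.ne n)

lemma zetaC_pow (n : ℕ) [NeZero n] : zetaC n ^ n = 1 := (zetaC_prim n).pow_eq_one

lemma eZ_add (n : ℕ) [NeZero n] (a b : ZMod n) : eZ n (a + b) = eZ n a * eZ n b := by
  unfold eZ
  rw [← pow_add]
  have h : a.val + b.val = (a + b).val + n * ((a.val + b.val) / n) := by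
    rw [ZMod.val_add]; exact (Nat.mod_add_div _ _).symm
  rw [h, pow_add, pow_mul, zetaC_pow, one_pow, mul_one]

lemma eZ_zero (n : ℕ) [NeZero n] : eZ n 0 = 1 := by
  simp [eZ]

lemma eZ_mul_neg (n : ℕ) [NeZero n] (a : ZMod n) : eZ n a * eZ n (-a) = 1 := by
  rw [← eZ_add, add_neg_cancel, eZ_zero]

lemma eZ_ne_one (n : ℕ) [NeZero n] {a : ZMod n} (ha : a ≠ 0) : eZ n a ≠ 1 :=
  (zetaC_prim n).pow_ne_one_of_pos_of_lt
    (fun h => ha ((ZMod.val_eq_zero a).mp h)) (ZMod.val_lt a)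

lemma sum_eZ (n : ℕ) [NeZero n] {c : ZMod n} (hc : c ≠ 0) :
    ∑ v : ZMod n, eZ n (v * c) = 0 := by
  have key : (∑ v : ZMod n, eZ n (v * c)) * eZ n c = ∑ v : ZMod n, eZ n (v * c) := by
    rw [Finset.sum_mul]
    have h1 : ∀ v : ZMod n, eZ n (v * c) * eZ n c = eZ n ((v + 1) * c) := by
      intro v; rw [← eZ_add]; ring_nf
    calc ∑ v : ZMod n, eZ n (v * c) * eZ n c = ∑ v : ZMod n, eZ n ((v + 1) * c) := by
          exact Finset.sum_congr rfl (fun v _ => h1 v)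
      _ = ∑ v : ZMod n, eZ n (v * c) :=
          Fintype.sum_equiv (Equiv.addRight 1) _ _ (fun v => rfl)
  have h2 : (∑ v : ZMod n, eZ n (v * c)) * (eZ n c - 1) = 0 := by
    rw [mul_sub, key, mul_one, sub_self]
  rcases mul_eq_zero.mp h2 with h | h
  · exact h
  · exact absurd (sub_eq_zero.mp h) (eZ_ne_one n hc)

noncomputable def Fmat (n : ℕ) [NeZero n] : Matrix (ZMod n) (ZMod n) ℂ :=
  Matrix.of fun u j => eZ n (u * j)

noncomputable def Gmat (n : ℕ) [NeZero n] : Matrix (ZMod n) (ZMod n) ℂ :=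
  Matrix.of fun j v => eZ n (-(j * v))

lemma F_mul_G (n : ℕ) [NeZero n] : Fmat n * Gmat n = (n : ℂ) • 1 := by
  ext u w
  rw [Matrix.mul_apply]
  have h1 : ∀ j : ZMod n, Fmat n u j * Gmat n j w = eZ n (j * (u - w)) := by
    intro j
    show eZ n (u * j) * eZ n (-(j * w)) = _
    rw [← eZ_add]; ring_nf
  rw [Finset.sum_congr rfl (fun j _ => h1 j)]
  by_cases h : u = w
  · subst h
    simp [eZ_zero, Matrix.one_apply, ZMod.card]
  · have : u - w ≠ 0 := sub_ne_zero.mpr h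
    rw [sum_eZ n this]
    simp [Matrix.one_apply, h]

lemma detF_ne_zero (n : ℕ) [NeZero n] : (Fmat n).det ≠ 0 := by
  intro h
  have h2 := congrArg Matrix.det (F_mul_G n)
  rw [Matrix.det_mul, h, zero_mul, Matrix.det_smul, Matrix.det_one, mul_one] at h2
  have : (n : ℂ) ≠ 0 := Nat.cast_ne_zero.mpr (NeZero.ne n)
  exact (pow_ne_zero _ this) h2.symm

noncomputable def CC (n m : ℕ) [NeZero n] : Matrix (ZMod n) (ZMod n) ℂ :=
  Matrix.of fun u v => if v = u + (m : ZMod n) ∨ v = u - (m : ZMod n) then 1 else 0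

lemma CC_mul_F (n m : ℕ) [NeZero n] (hm : (m : ZMod n) + (m : ZMod n) ≠ 0) :
    CC n m * Fmat n = Fmat n *
      Matrix.diagonal (fun j => eZ n ((m : ZMod n) * j) + eZ n (-((m : ZMod n) * j))) := by
  ext u j
  rw [Matrix.mul_apply, Matrix.mul_diagonal]
  have hne : u + (m : ZMod n) ≠ u - (m : ZMod n) := by
    intro h
    apply hm
    have := sub_eq_zero.mpr h
    rw [add_sub_sub_cancel] at this
    exact this
  have h1 : ∀ v : ZMod n, CC n m u v * Fmat n v j
      = if v = u + (m : ZMod n) ∨ v = u - (m : ZMod n) then eZ n (v * j) else 0 := by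
    intro v
    show (if _ then (1:ℂ) else 0) * eZ n (v * j) = _
    split <;> simp
  rw [Finset.sum_congr rfl (fun v _ => h1 v)]
  have h2 : (∑ v : ZMod n, if v = u + (m : ZMod n) ∨ v = u - (m : ZMod n)
      then eZ n (v * j) else 0)
      = ∑ v ∈ Finset.filter (fun v => v = u + (m : ZMod n) ∨ v = u - (m : ZMod n)) Finset.univ,
        eZ n (v * j) := (Finset.sum_filter _ _).symm
  have h3 : Finset.filter (fun v => v = u + (m : ZMod n) ∨ v = u - (m : ZMod n)) Finset.univ
      = {u + (m : ZMod n), u - (m : ZMod n)} := by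
    ext v; simp [Finset.mem_insert, Finset.mem_singleton]
  rw [h2, h3, Finset.sum_pair hne]
  show eZ n ((u + (m : ZMod n)) * j) + eZ n ((u - (m : ZMod n)) * j)
    = eZ n (u * j) * (eZ n ((m : ZMod n) * j) + eZ n (-((m : ZMod n) * j)))
  have e1 : (u + (m : ZMod n)) * j = u * j + (m : ZMod n) * j := by ring
  have e2 : (u - (m : ZMod n)) * j = u * j + -((m : ZMod n) * j) := by ring
  rw [e1, e2, eZ_add, eZ_add, mul_add]

lemma det_blocks {m : Type*} [Fintype m] [DecidableEq m] (A D : Matrix m m ℂ) :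
    (Matrix.fromBlocks A (-1) (-1) D).det = (D * A - 1).det := by
  letI : Invertible (1 : Matrix m m ℂ) := invertibleOne
  letI : Invertible (-1 : Matrix m m ℂ) := invertibleNeg 1
  set S : Matrix (m ⊕ m) (m ⊕ m) ℂ := Matrix.fromBlocks 0 1 1 0 with hS
  have hSS : S * S = 1 := by
    rw [hS, Matrix.fromBlocks_multiply]
    simp [Matrix.fromBlocks_one]
  have hMS : Matrix.fromBlocks A (-1) (-1) D * S = Matrix.fromBlocks (-1) A D (-1) := by
    rw [hS, Matrix.fromBlocks_multiply]
    simp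
  have hdetS : S.det = (-1 : ℂ) ^ Fintype.card m := by
    have hfac : S = Matrix.fromBlocks (-1) 1 1 0 * Matrix.fromBlocks 1 0 1 1 := by
      rw [hS, Matrix.fromBlocks_multiply]; simp
    rw [hfac, Matrix.det_mul, Matrix.det_fromBlocks₁₁, Matrix.det_fromBlocks_zero₁₂]
    have : ⅟(-1 : Matrix m m ℂ) = -1 := by
      rw [invOf_neg, invOf_one]
    rw [this]
    simp [Matrix.det_neg]
  have hdet1 : (Matrix.fromBlocks A (-1) (-1) D).det * S.det
      = (Matrix.fromBlocks (-1) A D (-1)).det := by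
    rw [← Matrix.det_mul, hMS]
  have hdet2 : (Matrix.fromBlocks (-1) A D (-1)).det
      = (-1 : ℂ) ^ Fintype.card m * (D * A - 1).det := by
    rw [Matrix.det_fromBlocks₁₁]
    have hinv : ⅟(-1 : Matrix m m ℂ) = -1 := by rw [invOf_neg, invOf_one]
    have : (-1 : Matrix m m ℂ) - D * ⅟(-1 : Matrix m m ℂ) * A = D * A - 1 := by
      rw [hinv]; noncomm_ring
    rw [this]
    simp [Matrix.det_neg]
  have hS2 : S.det * S.det = 1 := by rw [← Matrix.det_mul, hSS, Matrix.det_one]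
  calc (Matrix.fromBlocks A (-1) (-1) D).det
      = (Matrix.fromBlocks A (-1) (-1) D).det * (S.det * S.det) := by rw [hS2, mul_one]
    _ = ((Matrix.fromBlocks A (-1) (-1) D).det * S.det) * S.det := by ring
    _ = (-1 : ℂ) ^ Fintype.card m * (D * A - 1).det * ((-1 : ℂ) ^ Fintype.card m) := by
        rw [hdet1, hdet2, hdetS]
    _ = (D * A - 1).det := by ring_nf; rw [mul_comm (Fintype.card m) 2, pow_mul]; simp

lemma eZ_pair_cos (n : ℕ) [NeZero n] (a : ZMod n) :
    eZ n a + eZ n (-a) = ((2 * Real.cos (2 * Real.pi * a.val / n) : ℝ) : ℂ) := by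
  have h1 : eZ n a = Complex.exp (((2 * Real.pi * a.val / n : ℝ) : ℂ) * Complex.I) := by
    unfold eZ zetaC
    rw [← Complex.exp_nat_mul]
    congr 1
    push_cast
    ring
  have h2 : eZ n (-a) = Complex.exp (-(((2 * Real.pi * a.val / n : ℝ) : ℂ) * Complex.I)) := by
    rw [Complex.exp_neg, ← h1]
    exact eq_inv_of_mul_eq_one_left (by rw [mul_comm]; exact eZ_mul_neg n a)
  rw [h1, h2]
  have := Complex.two_cos (x := ((2 * Real.pi * a.val / n : ℝ) : ℂ))
  rw [neg_mul] at this
  rw [← this]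
  push_cast [Complex.ofReal_cos]
  ring

lemma quad_iff (a b x : ℝ) :
    (x - 2 * a) * (x - 2 * b) - 1 = 0 ↔
      ∃ s : ℝ, (s = 1 ∨ s = -1) ∧ x = a + b + s * Real.sqrt ((a - b) ^ 2 + 1) := by
  have hd : (0:ℝ) ≤ (a - b) ^ 2 + 1 := by positivity
  have key : (x - 2 * a) * (x - 2 * b) - 1 = (x - (a + b)) ^ 2 - ((a - b) ^ 2 + 1) := by ring
  rw [key, sub_eq_zero]
  constructor
  · intro h
    have habs : |x - (a + b)| = Real.sqrt ((a - b) ^ 2 + 1) := by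
      rw [← Real.sqrt_sq_eq_abs, h]
    rcases abs_cases (x - (a + b)) with ⟨h1, _⟩ | ⟨h1, _⟩
    · exact ⟨1, Or.inl rfl, by rw [one_mul, ← habs, h1]; ring⟩
    · exact ⟨-1, Or.inr rfl, by rw [neg_one_mul, ← habs, h1]; ring⟩
  · rintro ⟨s, hs, rfl⟩
    have hs2 : s ^ 2 = 1 := by rcases hs with rfl | rfl <;> norm_num
    have : (a + b + s * Real.sqrt ((a - b) ^ 2 + 1) - (a + b)) ^ 2
        = s ^ 2 * Real.sqrt ((a - b) ^ 2 + 1) ^ 2 := by ring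
    rw [this, hs2, one_mul, Real.sq_sqrt hd]

lemma cos_val_nat (n : ℕ) [NeZero n] (m : ℕ) :
    Real.cos (2 * Real.pi * (((m : ZMod n)).val : ℝ) / n) = Real.cos (2 * m * Real.pi / n) := by
  have hn : (n : ℝ) ≠ 0 := Nat.cast_ne_zero.mpr (NeZero.ne n)
  have hval : ((m : ZMod n)).val = m % n := ZMod.val_natCast n m
  obtain ⟨q, hq⟩ : ∃ q : ℕ, m = m % n + n * q := ⟨m / n, by have := Nat.mod_add_div m n; omega⟩
  have harg : 2 * (m : ℝ) * Real.pi / n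
      = 2 * Real.pi * ((m % n : ℕ) : ℝ) / n + ((q : ℕ) : ℤ) * (2 * Real.pi) := by
    have h0 : (m : ℝ) = ((m % n : ℕ) : ℝ) + (n : ℝ) * q := by exact_mod_cast hq
    rw [h0]
    push_cast
    field_simp
  rw [hval, harg, Real.cos_add_int_mul_two_pi]
theorem IGraph_eigenvalues (n k l : ℕ) [NeZero n] (hn : 3 ≤ n)
    (hk : 1 ≤ k) (hk' : 2 * k < n) (hl : 1 ≤ l) (hl' : 2 * l < n) (hkl : k ≠ l)
    (x : ℝ) :
    (x • (1 : Matrix (ZMod n ⊕ ZMod n) (ZMod n ⊕ ZMod n) ℝ) - IGraphAdj n k l).det = 0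
      ↔ ∃ j ∈ Finset.Icc 1 n, ∃ s : ℝ, (s = 1 ∨ s = -1) ∧
          x = Real.cos (2 * j * k * Real.pi / n) + Real.cos (2 * j * l * Real.pi / n)
            + s * Real.sqrt ((Real.cos (2 * j * k * Real.pi / n)
                - Real.cos (2 * j * l * Real.pi / n)) ^ 2 + 1) := by
  have hnR : (n : ℝ) ≠ 0 := Nat.cast_ne_zero.mpr (NeZero.ne n)
  -- double conditions
  have hdub : ∀ m : ℕ, 1 ≤ m → 2 * m < n → (m : ZMod n) + (m : ZMod n) ≠ 0 := by
    intro m h1 h2 h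
    have h3 : ((2 * m : ℕ) : ZMod n) = 0 := by push_cast; rw [two_mul]; exact h
    rw [ZMod.natCast_eq_zero_iff] at h3
    have := Nat.le_of_dvd (by omega) h3
    omega
  have hK2 := hdub k hk hk'
  have hL2 := hdub l hl hl'
  set Mr := x • (1 : Matrix (ZMod n ⊕ ZMod n) (ZMod n ⊕ ZMod n) ℝ) - IGraphAdj n k l with hMr
  -- step A : pass to ℂ
  have h0 : Mr.det = 0 ↔ (Mr.map Complex.ofRealHom).det = 0 := by
    have hdet := RingHom.map_det Complex.ofRealHom Mr
    rw [RingHom.mapMatrix_apply] at hdet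
    rw [← hdet]
    exact ⟨fun h => by simp [h], fun h => Complex.ofReal_eq_zero.mp h⟩
  -- step B : identify mapped matrix
  have hmap : Mr.map Complex.ofRealHom
      = Matrix.fromBlocks ((x : ℂ) • 1 - CC n k) (-1) (-1) ((x : ℂ) • 1 - CC n l) := by
    ext i j
    cases i <;> cases j <;>
      simp [hMr, Matrix.map_apply, IGraphAdj, circulantAdjR, CC, Matrix.sub_apply,
        Matrix.smul_apply, Matrix.one_apply, apply_ite (⇑Complex.ofRealHom),
        apply_ite (Complex.ofReal), smul_eq_mul]
  rw [h0, hmap, det_blocks]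
  -- step D : diagonalize
  have hdiag : ∀ m : ℕ, (m : ZMod n) + (m : ZMod n) ≠ 0 →
      ((x : ℂ) • 1 - CC n m) * Fmat n = Fmat n *
        Matrix.diagonal (fun j => (x : ℂ) - (eZ n ((m : ZMod n) * j) + eZ n (-((m : ZMod n) * j)))) := by
    intro m hm
    rw [Matrix.sub_mul, Matrix.smul_mul, one_mul, CC_mul_F n m hm]
    have hsmul : (x : ℂ) • Fmat n = Fmat n * Matrix.diagonal (fun _ => (x : ℂ)) := by
      ext u j; simp [Matrix.mul_diagonal, mul_comm]
    rw [hsmul, ← Matrix.mul_sub, Matrix.diagonal_sub]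
  set dK : ZMod n → ℂ := fun j => (x : ℂ) - (eZ n ((k : ZMod n) * j) + eZ n (-((k : ZMod n) * j))) with hdK
  set dL : ZMod n → ℂ := fun j => (x : ℂ) - (eZ n ((l : ZMod n) * j) + eZ n (-((l : ZMod n) * j))) with hdL
  have hMF : (((x : ℂ) • 1 - CC n l) * ((x : ℂ) • 1 - CC n k) - 1) * Fmat n
      = Fmat n * Matrix.diagonal (fun j => dL j * dK j - 1) := by
    rw [Matrix.sub_mul, one_mul, Matrix.mul_assoc, hdiag k hK2, ← Matrix.mul_assoc,
      hdiag l hL2]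
    ext u j
    simp only [Matrix.sub_apply, Matrix.mul_diagonal]
    ring
  have hdeteq : (((x : ℂ) • 1 - CC n l) * ((x : ℂ) • 1 - CC n k) - 1).det
      = (Matrix.diagonal (fun j => dL j * dK j - 1)).det := by
    apply mul_right_cancel₀ (detF_ne_zero n)
    rw [← Matrix.det_mul, hMF, Matrix.det_mul, mul_comm]
  rw [hdeteq, Matrix.det_diagonal, Finset.prod_eq_zero_iff]
  -- per-index characterization
  have hfac : ∀ j : ZMod n, (dL j * dK j - 1 = 0 ↔
      ∃ s : ℝ, (s = 1 ∨ s = -1) ∧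
        x = Real.cos (2 * Real.pi * (((k : ZMod n) * j).val : ℝ) / n)
          + Real.cos (2 * Real.pi * (((l : ZMod n) * j).val : ℝ) / n)
          + s * Real.sqrt ((Real.cos (2 * Real.pi * (((k : ZMod n) * j).val : ℝ) / n)
              - Real.cos (2 * Real.pi * (((l : ZMod n) * j).val : ℝ) / n)) ^ 2 + 1)) := by
    intro j
    have h1 : dL j * dK j - 1 =
        (((x - 2 * Real.cos (2 * Real.pi * (((k : ZMod n) * j).val : ℝ) / n))
          * (x - 2 * Real.cos (2 * Real.pi * (((l : ZMod n) * j).val : ℝ) / n)) - 1 : ℝ) : ℂ) := by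
      simp only [hdK, hdL, eZ_pair_cos]
      push_cast
      ring
    rw [h1, Complex.ofReal_eq_zero]
    exact quad_iff _ _ x
  -- bridge between `ZMod.val` angles and natural angles
  have hbr : ∀ m j' : ℕ, Real.cos (2 * Real.pi * (((m : ZMod n) * (j' : ZMod n)).val : ℝ) / n)
      = Real.cos (2 * (j' : ℝ) * (m : ℝ) * Real.pi / n) := by
    intro m j'
    have hc : (m : ZMod n) * (j' : ZMod n) = ((m * j' : ℕ) : ZMod n) := by push_cast; rfl
    rw [hc, cos_val_nat n (m * j')]
    congr 1
    push_cast
    ring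
  constructor
  · rintro ⟨j, -, hj⟩
    obtain ⟨s, hs, hx⟩ := (hfac j).mp hj
    refine ⟨if j = 0 then n else j.val, ?_, s, hs, ?_⟩
    · rcases eq_or_ne j 0 with h | h
      · subst h
        rw [if_pos rfl, Finset.mem_Icc]
        omega
      · have h1 : j.val ≠ 0 := fun hh => h ((ZMod.val_eq_zero j).mp hh)
        have h2 : j.val < n := ZMod.val_lt j
        rw [if_neg h, Finset.mem_Icc]
        omega
    · have hjcast : (((if j = 0 then n else j.val) : ℕ) : ZMod n) = j := by
        rcases eq_or_ne j 0 with h | h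
        · simp [h, ZMod.natCast_self]
        · rw [if_neg h]
          exact ZMod.natCast_zmod_val j
      rw [← hbr k _, ← hbr l _, hjcast]
      exact hx
  · rintro ⟨j', hj', s, hs, hx⟩
    refine ⟨(j' : ZMod n), Finset.mem_univ _, (hfac _).mpr ⟨s, hs, ?_⟩⟩
    rw [hbr k j', hbr l j']
    exact hx
end

section
/- Let n ≥ 3 and 1 ≤ k, ℓ < n/2. The characteristic polynomial of the I-graph I(n;k,ℓ) equals the product over j = 1,…,n of (x² − (2cos(2jkπ/n) + 2cos(2jℓπ/n))x + 4cos(2jkπ/n)cos(2jℓπ/n) − 1). -/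
open Matrix Real Finset

set_option linter.unusedSectionVars false

namespace IGraphAux

variable (n : ℕ) [NeZero n]

noncomputable def V : Matrix (ZMod n) (ZMod n) ℂ := fun i j => ZMod.stdAddChar (-(i*j))
noncomputable def W : Matrix (ZMod n) (ZMod n) ℂ := fun i j => ZMod.stdAddChar (i*j)

/-- complex indicator vector generating the circulant. -/
def ca (k : ℕ) : ZMod n → ℂ := fun t => if t = -(k : ZMod n) ∨ t = (k : ZMod n) then 1 else 0

variable {n}

lemma sum_char (t : ZMod n) : ∑ i, ZMod.stdAddChar (t * i) = if t = 0 then (n:ℂ) else 0 := by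
  split_ifs with h
  · simp [h, ZMod.card]
  · exact AddChar.sum_eq_zero_of_ne_one (ZMod.isPrimitive_stdAddChar n h)

lemma V_mul_W : V n * W n = (n:ℂ) • 1 := by
  ext i j
  simp only [V, W, Matrix.mul_apply, Matrix.smul_apply, Matrix.one_apply, smul_eq_mul]
  have : ∀ t : ZMod n, ZMod.stdAddChar (-(i*t)) * ZMod.stdAddChar (t*j)
      = ZMod.stdAddChar ((j - i) * t) := by
    intro t
    rw [← AddChar.map_add_eq_mul]
    ring_nf
  simp only [this, sum_char, sub_eq_zero]
  by_cases h : i = j <;> simp [h, eq_comm]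

lemma det_V_ne_zero : (V n).det ≠ 0 := by
  intro h
  have := congrArg Matrix.det (V_mul_W (n := n))
  rw [Matrix.det_mul, h, zero_mul, Matrix.det_smul, Matrix.det_one, mul_one] at this
  have hn : (n : ℂ) ≠ 0 := Nat.cast_ne_zero.mpr (NeZero.ne n)
  exact (pow_ne_zero _ hn) this.symm

lemma circulant_mul_V (f : ZMod n → ℂ) :
    Matrix.circulant f * V n
      = V n * Matrix.diagonal (fun j => ∑ t, f t * ZMod.stdAddChar (j * t)) := by
  ext i j
  rw [Matrix.mul_apply, Matrix.mul_apply]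
  simp only [V, Matrix.circulant_apply, Matrix.diagonal_apply]
  simp only [mul_ite, mul_zero]
  rw [Finset.sum_ite_eq' Finset.univ j (fun j' => ZMod.stdAddChar (-(i*j')) * ∑ t, f t * ZMod.stdAddChar (j' * t))]
  simp only [Finset.mem_univ, if_true, Finset.mul_sum]
  rw [← Equiv.sum_comp (Equiv.subLeft i) (fun t => f (i - t) * ZMod.stdAddChar (-(t * j)))]
  refine Finset.sum_congr rfl fun s _ => ?_
  simp only [Equiv.subLeft_apply, sub_sub_cancel]
  rw [mul_left_comm, ← AddChar.map_add_eq_mul]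
  congr 2
  ring

def sumProdEquiv : ZMod n ⊕ ZMod n ≃ Fin 2 × ZMod n where
  toFun := Sum.elim (fun j => (0, j)) (fun j => (1, j))
  invFun := fun p => if p.1 = 0 then Sum.inl p.2 else Sum.inr p.2
  left_inv := by rintro (j|j) <;> simp
  right_inv := by rintro ⟨i, j⟩; fin_cases i <;> simp

lemma det_diag_blocks (p q : ZMod n → ℂ) :
    (Matrix.fromBlocks (Matrix.diagonal p) (-1) (-1) (Matrix.diagonal q)).det
      = ∏ j : ZMod n, (p j * q j - 1) := by
  have heq : Matrix.fromBlocks (Matrix.diagonal p) (-1) (-1) (Matrix.diagonal q)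
      = (Matrix.blockDiagonal (fun j => !![p j, -1; -1, q j])).submatrix
          (sumProdEquiv (n := n)) (sumProdEquiv (n := n)) := by
    ext i j
    rcases i with i|i <;> rcases j with j|j <;>
      · by_cases h : i = j <;>
          simp [sumProdEquiv, Matrix.blockDiagonal_apply, Matrix.diagonal_apply,
            Matrix.one_apply, h]
  rw [heq, Matrix.det_submatrix_equiv_self, Matrix.det_blockDiagonal]
  refine Finset.prod_congr rfl fun j _ => ?_
  rw [Matrix.det_fin_two_of]
  ring

lemma det_blocks (P Q : Matrix (ZMod n) (ZMod n) ℂ) (p q : ZMod n → ℂ)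
    (hP : P * V n = V n * Matrix.diagonal p) (hQ : Q * V n = V n * Matrix.diagonal q) :
    (Matrix.fromBlocks P (-1) (-1) Q).det = ∏ j : ZMod n, (p j * q j - 1) := by
  have key : Matrix.fromBlocks P (-1) (-1) Q * Matrix.fromBlocks (V n) 0 0 (V n)
      = Matrix.fromBlocks (V n) 0 0 (V n)
        * Matrix.fromBlocks (Matrix.diagonal p) (-1) (-1) (Matrix.diagonal q) := by
    rw [Matrix.fromBlocks_multiply, Matrix.fromBlocks_multiply]
    rw [hP, hQ]
    simp
  have hdet := congrArg Matrix.det key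
  rw [Matrix.det_mul, Matrix.det_mul, Matrix.det_fromBlocks_zero₁₂] at hdet
  rw [← det_diag_blocks p q]
  have hV : (V n).det * (V n).det ≠ 0 := mul_ne_zero det_V_ne_zero det_V_ne_zero
  refine mul_right_cancel₀ hV ?_
  rw [hdet]; ring

lemma neg_ne_self_of (k : ℕ) (hk : 1 ≤ k) (hk' : 2 * k < n) :
    -(k : ZMod n) ≠ (k : ZMod n) := by
  intro h
  have h2 : ((2 * k : ℕ) : ZMod n) = 0 := by
    push_cast
    linear_combination -h
  rw [ZMod.natCast_eq_zero_iff] at h2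
  have := Nat.le_of_dvd (by omega) h2
  omega

lemma sum_indicator (i k : ℕ) (hk : 1 ≤ k) (hk' : 2 * k < n) :
    ∑ t : ZMod n, ca n k t * ZMod.stdAddChar ((i:ZMod n) * t)
      = ((2 * Real.cos (2 * Real.pi * (i*k) / n) : ℝ) : ℂ) := by
  have hkk := neg_ne_self_of (n := n) k hk hk'
  have hmem : ∀ t : ZMod n, (t = -(k:ZMod n) ∨ t = (k:ZMod n))
      ↔ t ∈ ({-(k:ZMod n), (k:ZMod n)} : Finset (ZMod n)) := by
    intro t; simp
  simp only [ca, hmem, ite_mul, one_mul, zero_mul]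
  rw [Finset.sum_ite_mem, Finset.univ_inter, Finset.sum_pair hkk]
  have e1 : (i:ZMod n) * -(k : ZMod n) = (Int.cast (-((i:ℤ)*(k:ℤ))) : ZMod n) := by
    push_cast; ring
  have e2 : (i:ZMod n) * (k : ZMod n) = (Int.cast ((i:ℤ)*(k:ℤ)) : ZMod n) := by
    push_cast; ring
  rw [e1, e2, ZMod.stdAddChar_coe, ZMod.stdAddChar_coe]
  set θ : ℝ := 2 * Real.pi * (i*k) / n with hθ
  have a1 : 2 * Real.pi * Complex.I * (Int.cast (-((i:ℤ)*(k:ℤ))) : ℂ) / n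
      = ((-θ : ℝ) : ℂ) * Complex.I := by
    rw [hθ]; push_cast; ring
  have a2 : 2 * Real.pi * Complex.I * (Int.cast ((i:ℤ)*(k:ℤ)) : ℂ) / n
      = ((θ : ℝ) : ℂ) * Complex.I := by
    rw [hθ]; push_cast; ring
  rw [a1, a2, Complex.exp_mul_I, Complex.exp_mul_I]
  push_cast
  simp [Complex.cos_neg, Complex.sin_neg, Complex.cos_ofReal_re]
  ring

lemma cond_iff_left (u v w : ZMod n) : v = u + w ↔ u - v = -w := by
  constructor <;> intro h <;> linear_combination -h

lemma cond_iff_right (u v w : ZMod n) : v = u - w ↔ u - v = w := by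
  constructor <;> intro h <;> linear_combination -h

lemma map_eq (k l : ℕ) (x : ℝ) :
    (x • (1 : Matrix (ZMod n ⊕ ZMod n) (ZMod n ⊕ ZMod n) ℝ) - IGraphAdj n k l).map
        (Complex.ofReal)
      = Matrix.fromBlocks ((x:ℂ) • 1 - Matrix.circulant (ca n k)) (-1) (-1)
          ((x:ℂ) • 1 - Matrix.circulant (ca n l)) := by
  ext i j
  rcases i with i|i <;> rcases j with j|j <;>
    simp only [Matrix.map_apply, Matrix.sub_apply, Matrix.smul_apply, Matrix.one_apply,
      IGraphAdj, circulantAdjR, Matrix.fromBlocks, Matrix.of_apply, Sum.elim_inl, Sum.elim_inr,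
      Matrix.circulant_apply, ca, Matrix.neg_apply, smul_eq_mul, Sum.inl.injEq, Sum.inr.injEq,
      cond_iff_left, cond_iff_right] <;>
    split_ifs <;> first
      | contradiction
      | (push_cast; ring)

lemma shifted_circ_mul_V (k : ℕ) (x : ℝ) :
    ((x:ℂ) • 1 - Matrix.circulant (ca n k)) * V n
      = V n * Matrix.diagonal
          (fun j => (x:ℂ) - ∑ t, ca n k t * ZMod.stdAddChar (j * t)) := by
  rw [Matrix.sub_mul, circulant_mul_V, Matrix.smul_mul, Matrix.one_mul]
  have h1 : (x:ℂ) • V n = V n * Matrix.diagonal (fun _ => (x:ℂ)) := by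
    rw [← Matrix.smul_one_eq_diagonal, Matrix.mul_smul, Matrix.mul_one]
  rw [h1, ← Matrix.mul_sub, ← Matrix.diagonal_sub]

end IGraphAux

open IGraphAux in
theorem IGraph_charpoly (n k l : ℕ) [NeZero n] (hn : 3 ≤ n)
    (hk : 1 ≤ k) (hk' : 2 * k < n) (hl : 1 ≤ l) (hl' : 2 * l < n) (x : ℝ) :
    (x • (1 : Matrix (ZMod n ⊕ ZMod n) (ZMod n ⊕ ZMod n) ℝ) - IGraphAdj n k l).det
      = ∏ j ∈ Finset.Icc 1 n,
          (x ^ 2 - (2 * Real.cos (2 * j * k * Real.pi / n)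
              + 2 * Real.cos (2 * j * l * Real.pi / n)) * x
            + 4 * Real.cos (2 * j * k * Real.pi / n) * Real.cos (2 * j * l * Real.pi / n)
            - 1) := by
  classical
  set M := x • (1 : Matrix (ZMod n ⊕ ZMod n) (ZMod n ⊕ ZMod n) ℝ) - IGraphAdj n k l with hM
  have hmap : ((M.det : ℝ) : ℂ) = (M.map Complex.ofReal).det :=
    RingHom.map_det Complex.ofRealHom M
  rw [hM, map_eq k l x,
    det_blocks _ _ _ _ (shifted_circ_mul_V k x) (shifted_circ_mul_V l x)] at hmap
  -- factor-level identity
  set g : ℕ → ℝ := fun i =>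
    x ^ 2 - (2 * Real.cos (2 * i * k * Real.pi / n)
        + 2 * Real.cos (2 * i * l * Real.pi / n)) * x
      + 4 * Real.cos (2 * i * k * Real.pi / n) * Real.cos (2 * i * l * Real.pi / n) - 1
    with hg
  have hfac : ∀ i : ℕ,
      ((x:ℂ) - ∑ t, ca n k t * ZMod.stdAddChar ((i : ZMod n) * t))
        * ((x:ℂ) - ∑ t, ca n l t * ZMod.stdAddChar ((i : ZMod n) * t)) - 1
      = ((g i : ℝ) : ℂ) := by
    intro i
    rw [sum_indicator i k hk hk', sum_indicator i l hl hl', hg]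
    have ek : 2 * Real.pi * ((i:ℝ) * k) / n = 2 * i * k * Real.pi / n := by ring
    have el : 2 * Real.pi * ((i:ℝ) * l) / n = 2 * i * l * Real.pi / n := by ring
    rw [ek, el]
    push_cast
    ring
  -- reindex the product
  have hprod : (∏ j : ZMod n,
      (((x:ℂ) - ∑ t, ca n k t * ZMod.stdAddChar (j * t))
        * ((x:ℂ) - ∑ t, ca n l t * ZMod.stdAddChar (j * t)) - 1))
      = ∏ i ∈ Finset.Icc 1 n, ((g i : ℝ) : ℂ) := by
    refine Finset.prod_nbij' (fun (z : ZMod n) => if z.val = 0 then n else z.val)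
      (fun (a : ℕ) => (a : ZMod n)) ?_ ?_ ?_ ?_ ?_
    · intro z _
      simp only [Finset.mem_Icc]
      have := ZMod.val_lt z
      split_ifs <;> omega
    · intro a _; exact Finset.mem_univ _
    · intro z _
      split_ifs with h
      · rw [ZMod.natCast_self]
        exact ((ZMod.val_eq_zero z).mp h).symm
      · exact ZMod.natCast_zmod_val z
    · intro a ha
      simp only [Finset.mem_Icc] at ha
      by_cases hA : a = n
      · subst hA
        simp [ZMod.natCast_self, ZMod.val_zero]
      · have hlt : a < n := by omega
        rw [ZMod.val_natCast_of_lt hlt]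
        simp only [if_neg (by omega : ¬ a = 0)]
    · intro z _
      rw [← hfac (if z.val = 0 then n else z.val)]
      congr 2 <;>
      · split_ifs with h
        · rw [ZMod.natCast_self, (ZMod.val_eq_zero z).mp h]
        · rw [ZMod.natCast_zmod_val]
  rw [hprod] at hmap
  rw [← Complex.ofReal_prod] at hmap
  exact_mod_cast hmap
end

section
/- For each j with 1 ≤ j ≤ 7, the determinant of the 4×4 matrix with first row (x, −1, −1, −1), first column (x, −1, −1, −1)ᵀ, and diagonal (x, x − 2cos(2πj/7), x − 2cos(4πj/7), x − 2cos(6πj/7)) with all remaining entries zero, multiplied over j = 1,…,7, equals (x−3)(x−2)²(x+1)·((x−2)(x+1)(x²+2x−1))⁶. -/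
open Matrix Real Finset
lemma arrow_det (x : ℝ) (f : ℕ → ℝ) :
    (Matrix.of fun a b : Fin 4 =>
      if a = b then x - (if a.val = 0 then 0 else f a.val)
      else if a.val = 0 ∨ b.val = 0 then (-1 : ℝ) else 0).det
    = x*(x - f 1)*(x - f 2)*(x - f 3)
      - ((x - f 2)*(x - f 3) + (x - f 1)*(x - f 3) + (x - f 1)*(x - f 2)) := by
  have hm : (Matrix.of fun a b : Fin 4 =>
      if a = b then x - (if a.val = 0 then 0 else f a.val)
      else if a.val = 0 ∨ b.val = 0 then (-1 : ℝ) else 0)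
      = !![x,-1,-1,-1; -1,x - f 1,0,0; -1,0,x - f 2,0; -1,0,0,x - f 3] := by
    ext a b
    fin_cases a <;> fin_cases b <;> norm_num [Matrix.vecHead, Matrix.vecTail] <;> intro h <;> exact absurd h (by decide)
  rw [hm]
  simp [Matrix.det_succ_row_zero, Fin.sum_univ_succ, Fin.succAbove, Fin.castSucc, Fin.castAdd, Fin.castLE]
  ring

lemma quart (x a b c : ℝ) (h1 : a + b + c = -(1/2)) (h2 : a*b + a*c + b*c = -(1/2)) (h3 : a*b*c = 1/8) :
    x*(x - 2*a)*(x - 2*b)*(x - 2*c) - ((x - 2*b)*(x - 2*c) + (x - 2*a)*(x - 2*c) + (x - 2*a)*(x - 2*b))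
    = (x - 2)*(x + 1)*(x^2 + 2*x - 1) := by
  linear_combination (2*(2*x - x^3))*h1 + (4*(x^2 - 1))*h2 + (-8*x)*h3

lemma crefl (y : ℝ) : Real.cos (2*Real.pi - y) = Real.cos y := by
  rw [Real.cos_sub]; simp

lemma csum7 : Real.cos (2*Real.pi/7) + Real.cos (2*Real.pi*2/7) + Real.cos (2*Real.pi*3/7) = -(1/2) := by
  have hs : Real.sin (Real.pi/7) ≠ 0 := by
    have := Real.sin_pos_of_pos_of_lt_pi (x := Real.pi/7) (by positivity)
      (by nlinarith [Real.pi_pos])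
    linarith
  have t1 := Real.sin_add (2*Real.pi/7) (Real.pi/7)
  have t1' := Real.sin_sub (2*Real.pi/7) (Real.pi/7)
  have t2 := Real.sin_add (2*Real.pi*2/7) (Real.pi/7)
  have t2' := Real.sin_sub (2*Real.pi*2/7) (Real.pi/7)
  have t3 := Real.sin_add (2*Real.pi*3/7) (Real.pi/7)
  have t3' := Real.sin_sub (2*Real.pi*3/7) (Real.pi/7)
  have e1 : (2*Real.pi/7 - Real.pi/7 : ℝ) = Real.pi/7 := by ring
  have e2 : (2*Real.pi/7 + Real.pi/7 : ℝ) = 2*Real.pi*2/7 - Real.pi/7 := by ring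
  have e3 : (2*Real.pi*2/7 + Real.pi/7 : ℝ) = 2*Real.pi*3/7 - Real.pi/7 := by ring
  have e4 : (2*Real.pi*3/7 + Real.pi/7 : ℝ) = Real.pi := by ring
  rw [e1] at t1'
  rw [e2] at t1
  rw [e3] at t2
  rw [e4, Real.sin_pi] at t3
  -- telescoping: sum of (t_i - t_i') gives 0 - sin(pi/7) = 2 sin(pi/7) * (sum of cos)
  have key : Real.sin (Real.pi/7) * (2*(Real.cos (2*Real.pi/7) + Real.cos (2*Real.pi*2/7) + Real.cos (2*Real.pi*3/7)) + 1) = 0 := by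
    nlinarith [t1, t1', t2, t2', t3, t3']
  have := mul_eq_zero.mp key
  rcases this with h | h
  · exact absurd h hs
  · linarith

lemma cprod7 : Real.cos (2*Real.pi/7) * Real.cos (2*Real.pi*2/7) * Real.cos (2*Real.pi*3/7) = 1/8 := by
  have hs : Real.sin (2*Real.pi/7) ≠ 0 := by
    have := Real.sin_pos_of_pos_of_lt_pi (x := 2*Real.pi/7) (by positivity)
      (by nlinarith [Real.pi_pos])
    linarith
  have t1 : Real.sin (2*Real.pi*2/7) = 2 * Real.sin (2*Real.pi/7) * Real.cos (2*Real.pi/7) := by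
    rw [show (2*Real.pi*2/7 : ℝ) = 2*(2*Real.pi/7) by ring]; exact Real.sin_two_mul _
  have t2 : Real.sin (2*Real.pi*4/7) = 2 * Real.sin (2*Real.pi*2/7) * Real.cos (2*Real.pi*2/7) := by
    rw [show (2*Real.pi*4/7 : ℝ) = 2*(2*Real.pi*2/7) by ring]; exact Real.sin_two_mul _
  have t3 : Real.sin (2*Real.pi/7) = 2 * Real.sin (2*Real.pi*4/7) * Real.cos (2*Real.pi*3/7) := by
    have := Real.sin_two_mul (2*Real.pi*4/7)
    rw [show (2*(2*Real.pi*4/7) : ℝ) = 2*Real.pi/7 + 2*Real.pi by ring, Real.sin_add_two_pi,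
      show Real.cos (2*Real.pi*4/7) = Real.cos (2*Real.pi*3/7) by
        rw [show (2*Real.pi*4/7 : ℝ) = 2*Real.pi - 2*Real.pi*3/7 by ring, crefl]] at this
    exact this
  have key : Real.sin (2*Real.pi/7) * (8 * (Real.cos (2*Real.pi/7) * Real.cos (2*Real.pi*2/7) * Real.cos (2*Real.pi*3/7)) - 1) = 0 := by
    linear_combination (-1 : ℝ)*t3 + (-2*Real.cos (2*Real.pi*3/7))*t2
      + (-4*Real.cos (2*Real.pi*2/7)*Real.cos (2*Real.pi*3/7))*t1
  rcases mul_eq_zero.mp key with h | h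
  · exact absurd h hs
  · linarith

lemma csym7 : Real.cos (2*Real.pi/7) * Real.cos (2*Real.pi*2/7)
    + Real.cos (2*Real.pi/7) * Real.cos (2*Real.pi*3/7)
    + Real.cos (2*Real.pi*2/7) * Real.cos (2*Real.pi*3/7) = -(1/2) := by
  set a := Real.cos (2*Real.pi/7)
  set b := Real.cos (2*Real.pi*2/7)
  set c := Real.cos (2*Real.pi*3/7)
  have ha2 : a^2 = 1/2 + b/2 := by
    have := Real.cos_sq (2*Real.pi/7)
    rwa [show (2*(2*Real.pi/7) : ℝ) = 2*Real.pi*2/7 by ring] at this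
  have hb2 : b^2 = 1/2 + c/2 := by
    have := Real.cos_sq (2*Real.pi*2/7)
    rwa [show (2*(2*Real.pi*2/7) : ℝ) = 2*Real.pi - 2*Real.pi*3/7 by ring, crefl] at this
  have hc2 : c^2 = 1/2 + a/2 := by
    have := Real.cos_sq (2*Real.pi*3/7)
    rwa [show (2*(2*Real.pi*3/7) : ℝ) = 2*Real.pi - 2*Real.pi/7 by ring, crefl] at this
  have hsum := csum7
  linear_combination ((a+b+c)/2 - 1/2) * hsum - ha2/2 - hb2/2 - hc2/2

theorem coxeter_determinant_product (x : ℝ) :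
    (∏ j ∈ Finset.Icc (1 : ℕ) 7,
        (Matrix.of fun a b : Fin 4 =>
          if a = b then
            x - (if a.val = 0 then 0 else 2 * Real.cos (2 * Real.pi * j * a.val / 7))
          else if a.val = 0 ∨ b.val = 0 then (-1 : ℝ)
          else 0).det)
      = (x - 3) * (x - 2) ^ 2 * (x + 1)
        * ((x - 2) * (x + 1) * (x ^ 2 + 2 * x - 1)) ^ 6 := by
  have hval : ∀ j ∈ Finset.Icc (1 : ℕ) 7,
      (Matrix.of fun a b : Fin 4 =>
          if a = b then
            x - (if a.val = 0 then 0 else 2 * Real.cos (2 * Real.pi * j * a.val / 7))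
          else if a.val = 0 ∨ b.val = 0 then (-1 : ℝ)
          else 0).det
      = if j = 7 then (x - 3) * (x - 2) ^ 2 * (x + 1)
        else (x - 2) * (x + 1) * (x ^ 2 + 2 * x - 1) := by
    intro j hj
    refine (arrow_det x (fun n : ℕ => 2 * Real.cos (2 * Real.pi * j * n / 7))).trans ?_
    beta_reduce
    rw [Finset.mem_Icc] at hj
    obtain ⟨hj1, hj2⟩ := hj
    interval_cases j
    · norm_num
      exact quart x _ _ _ csum7 csym7 cprod7
    · norm_num
      rw [show (2*Real.pi*2*2/7 : ℝ) = 2*Real.pi - 2*Real.pi*3/7 by ring, crefl,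
        show (2*Real.pi*2*3/7 : ℝ) = 2*Real.pi - 2*Real.pi/7 by ring, crefl]
      exact quart x _ _ _ (by linear_combination csum7) (by linear_combination csym7)
        (by linear_combination cprod7)
    · norm_num
      rw [show (2*Real.pi*3*2/7 : ℝ) = 2*Real.pi - 2*Real.pi/7 by ring, crefl,
        show (2*Real.pi*3*3/7 : ℝ) = 2*Real.pi*2/7 + 2*Real.pi by ring, Real.cos_add_two_pi]
      exact quart x _ _ _ (by linear_combination csum7) (by linear_combination csym7)
        (by linear_combination cprod7)
    · norm_num
      rw [show (2*Real.pi*4/7 : ℝ) = 2*Real.pi - 2*Real.pi*3/7 by ring, crefl,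
        show (2*Real.pi*4*2/7 : ℝ) = 2*Real.pi/7 + 2*Real.pi by ring, Real.cos_add_two_pi,
        show (2*Real.pi*4*3/7 : ℝ) = (2*Real.pi - 2*Real.pi*2/7) + 2*Real.pi by ring,
        Real.cos_add_two_pi, crefl]
      exact quart x _ _ _ (by linear_combination csum7) (by linear_combination csym7)
        (by linear_combination cprod7)
    · norm_num
      rw [show (2*Real.pi*5/7 : ℝ) = 2*Real.pi - 2*Real.pi*2/7 by ring, crefl,
        show (2*Real.pi*5*2/7 : ℝ) = 2*Real.pi*3/7 + 2*Real.pi by ring, Real.cos_add_two_pi,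
        show (2*Real.pi*5*3/7 : ℝ) = (2*Real.pi/7 + 2*Real.pi) + 2*Real.pi by ring,
        Real.cos_add_two_pi, Real.cos_add_two_pi]
      exact quart x _ _ _ (by linear_combination csum7) (by linear_combination csym7)
        (by linear_combination cprod7)
    · norm_num
      rw [show (2*Real.pi*6/7 : ℝ) = 2*Real.pi - 2*Real.pi/7 by ring, crefl,
        show (2*Real.pi*6*2/7 : ℝ) = (2*Real.pi - 2*Real.pi*2/7) + 2*Real.pi by ring,
        Real.cos_add_two_pi, crefl,
        show (2*Real.pi*6*3/7 : ℝ) = ((2*Real.pi - 2*Real.pi*3/7) + 2*Real.pi) + 2*Real.pi by ring,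
        Real.cos_add_two_pi, Real.cos_add_two_pi, crefl]
      exact quart x _ _ _ (by linear_combination csum7) (by linear_combination csym7)
        (by linear_combination cprod7)
    · norm_num
      rw [show (2*Real.pi*7*2/7 : ℝ) = 2*Real.pi + 2*Real.pi by ring, Real.cos_add_two_pi,
        Real.cos_two_pi,
        show (2*Real.pi*7*3/7 : ℝ) = (2*Real.pi + 2*Real.pi) + 2*Real.pi by ring,
        Real.cos_add_two_pi, Real.cos_add_two_pi, Real.cos_two_pi]
      ring
  rw [Finset.prod_congr rfl hval]
  rw [show Finset.Icc (1:ℕ) 7 = {1,2,3,4,5,6,7} by rfl]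
  norm_num [Finset.prod_insert, Finset.mem_insert, Finset.mem_singleton]
  ring
end
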